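/- Let G be a locally compact Hausdorff abelian topological group endowed with its Borel σ-algebra, K ⊆ G a compact neighbourhood of 0, and g : G → ℂ continuous with compact support. Then there exists a constant C > 0 (depending only on g and K) such that for every (positive, Borel) measure μ on G, every real M ≥ 0 with μ(t + K) ≤ M for all t ∈ G, and every x ∈ G, ∫ |g(x − y)| dμ(y) ≤ C · (sup_{u∈G} |g(u)|) · M; in particular the integral ∫ g(x − y) dμ(y) exists and satisfies |∫ g(x − y) dμ(y)| ≤ C · ‖g‖_∞ · M. -/

import Mathlib

open scoped Pointwise
open MeasureTheory
open scoped ENNReal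

/-- Key convolution estimate: for a continuous compactly supported `g` on a locally compact
abelian group and a compact neighbourhood `K` of `0`, there is a constant `C > 0` such that
for every measure `μ` which is translation bounded with bound `M` (i.e. `μ(t + K) ≤ M` for
all `t`), the convolution integrals satisfy `∫ |g(x − y)| dμ(y) ≤ C ‖g‖_∞ M`; in particular
`y ↦ g(x − y)` is integrable and `|∫ g(x − y) dμ(y)| ≤ C ‖g‖_∞ M`. -/
theorem convolution_translation_bounded_estimate {G : Type*} [AddCommGroup G]
    [TopologicalSpace G] [IsTopologicalAddGroup G] [LocallyCompactSpace G] [T2Space G]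
    [MeasurableSpace G] [BorelSpace G]
    (K : Set G) (hK : IsCompact K) (hK0 : K ∈ nhds (0 : G))
    (g : G → ℂ) (hgc : Continuous g) (hgsupp : HasCompactSupport g) :
    ∃ C : ℝ, 0 < C ∧
      ∀ μ : Measure G, ∀ M : ℝ, 0 ≤ M → (∀ t : G, μ ({t} + K) ≤ ENNReal.ofReal M) →
        ∀ x : G,
          (∫ y, ‖g (x - y)‖ ∂μ) ≤ C * (⨆ u : G, ‖g u‖) * M ∧
          Integrable (fun y => g (x - y)) μ ∧
          ‖∫ y, g (x - y) ∂μ‖ ≤ C * (⨆ u : G, ‖g u‖) * M := by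
  classical
  -- cover the (compact) support of `g` by finitely many translates `p + (-interior K)`
  have h0 : (0 : G) ∈ interior K := mem_interior_iff_mem_nhds.2 hK0
  have hcover : tsupport g ⊆ ⋃ p : G, p +ᵥ (-interior K) := by
    intro q hq
    exact Set.mem_iUnion.2 ⟨q, ⟨-(0 : G), by simpa using h0, by simp⟩⟩
  obtain ⟨F, hF⟩ := hgsupp.elim_finite_subcover (fun p : G => p +ᵥ (-interior K))
    (fun p => (isOpen_interior.neg).vadd p) hcover
  -- the supremum of `|g|`
  set S : ℝ := ⨆ u : G, ‖g u‖ with hS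
  have hbdd : BddAbove (Set.range fun u => ‖g u‖) := by
    simpa using
      hgc.norm.bddAbove_range_of_hasCompactSupport hgsupp.norm
  have hle : ∀ u : G, ‖g u‖ ≤ S := fun u => le_ciSup hbdd u
  have hS0 : 0 ≤ S := le_trans (norm_nonneg (g 0)) (hle 0)
  refine ⟨(F.card : ℝ) + 1, by positivity, ?_⟩
  intro μ M hM hμ x
  -- the relevant set containing the support of `y ↦ g (x - y)`
  set T : Set G := ⋃ p ∈ F, ({x - p} + K) with hT
  have hTclosed : IsClosed T := by
    apply Set.Finite.isClosed_biUnion F.finite_toSet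
    intro p _
    exact (isCompact_singleton.add hK).isClosed
  have hTmeas : MeasurableSet T := hTclosed.measurableSet
  have hsupp : ∀ y : G, g (x - y) ≠ 0 → y ∈ T := by
    intro y hy
    have hxy : x - y ∈ tsupport g := subset_closure (by simpa [Function.mem_support] using hy)
    obtain ⟨p, hpF, hp⟩ := Set.mem_iUnion₂.1 (hF hxy)
    -- `x - y ∈ p +ᵥ (-interior K)` means `-p + (x - y) ∈ -interior K`
    rw [Set.mem_vadd_set_iff_neg_vadd_mem] at hp
    have hk0 : -(-p +ᵥ (x - y)) ∈ interior K := by simpa using hp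
    have he : -(-p +ᵥ (x - y)) = -(x - p) + y := by
      simp only [vadd_eq_add]; abel
    have hk : -(x - p) + y ∈ K := interior_subset (he ▸ hk0)
    refine Set.mem_biUnion hpF ?_
    rw [Set.singleton_add]
    exact ⟨-(x - p) + y, hk, by show x - p + (-(x - p) + y) = y; rw [add_neg_cancel_left]⟩
  -- measure bound on `T`
  have hμT : μ T ≤ ENNReal.ofReal ((F.card : ℝ) * M) := by
    have h1 : μ T ≤ ∑ p ∈ F, μ ({x - p} + K) := measure_biUnion_finset_le F _
    have h2 : (∑ p ∈ F, μ ({x - p} + K)) ≤ ∑ _p ∈ F, ENNReal.ofReal M :=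
      Finset.sum_le_sum fun p _ => hμ (x - p)
    have h3 : (∑ _p ∈ F, (ENNReal.ofReal M : ℝ≥0∞)) = ENNReal.ofReal ((F.card : ℝ) * M) := by
      rw [Finset.sum_const, nsmul_eq_mul, ENNReal.ofReal_mul (by positivity),
        ENNReal.ofReal_natCast]
    exact (h1.trans h2).trans_eq h3
  have hμTlt : μ T < ∞ := lt_of_le_of_lt hμT ENNReal.ofReal_lt_top
  have hμTreal : (μ T).toReal ≤ (F.card : ℝ) * M :=
    ENNReal.toReal_le_of_le_ofReal (by positivity) hμT
  -- integrability
  have hcont : Continuous fun y : G => g (x - y) := hgc.comp (continuous_const.sub continuous_id)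
  have hIntOn : IntegrableOn (fun y => g (x - y)) T μ := by
    refine Integrable.mono' (g := fun _ : G => S) (integrableOn_const hμTlt.ne)
      (hcont.aestronglyMeasurable.restrict) ?_
    exact Filter.Eventually.of_forall fun y => by
      simpa using hle (x - y)
  have hsuppT : Function.support (fun y => g (x - y)) ⊆ T := fun y hy => hsupp y hy
  have hInt : Integrable (fun y => g (x - y)) μ := by
    have := (integrable_indicator_iff hTmeas).2 hIntOn
    rwa [Set.indicator_eq_self.mpr hsuppT] at this
  -- bound on `∫ |g (x - y)|`
  have habs_eq : (∫ y, ‖g (x - y)‖ ∂μ)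
      = ∫ y in T, ‖g (x - y)‖ ∂μ := by
    refine (setIntegral_eq_integral_of_forall_compl_eq_zero fun y hy => ?_).symm
    have : g (x - y) = 0 := by
      by_contra h; exact hy (hsupp y h)
    simp [this]
  have habs_bound : (∫ y in T, ‖g (x - y)‖ ∂μ) ≤ S * (μ T).toReal := by
    have := norm_setIntegral_le_of_norm_le_const (f := fun y => ‖g (x - y)‖)
      hμTlt (fun y _ => by
        simpa [Real.norm_eq_abs, abs_of_nonneg (norm_nonneg _)] using hle (x - y))
    exact le_trans (le_abs_self _) (by simpa [Real.norm_eq_abs, measureReal_def] using this)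
  have hmain : (∫ y, ‖g (x - y)‖ ∂μ) ≤ ((F.card : ℝ) + 1) * S * M := by
    rw [habs_eq]
    refine le_trans habs_bound ?_
    calc S * (μ T).toReal ≤ S * ((F.card : ℝ) * M) := by
          exact mul_le_mul_of_nonneg_left hμTreal hS0
      _ ≤ ((F.card : ℝ) + 1) * S * M := by nlinarith
  refine ⟨hmain, hInt, ?_⟩
  calc ‖∫ y, g (x - y) ∂μ‖ ≤ ∫ y, ‖g (x - y)‖ ∂μ := by
        simpa using norm_integral_le_integral_norm (fun y => g (x - y))
    _ ≤ ((F.card : ℝ) + 1) * S * M := hmain
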